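/- Let X and Y be nonnegative random variables (on possibly different probability spaces) and p, q ∈ (0,1) with p + q = 1. If E[X^p] < ∞ and E[Y^q] < ∞, then Σ_{n=0}^∞ P[X > n] · P[Y > n] < ∞. -/

import Mathlib

open MeasureTheory

/-- Bernoulli-type estimate: for `0 < p < 1`, `p + q = 1` and `x ≥ 1`,
`p * x ^ (-q) ≤ x ^ p - (x - 1) ^ p`. -/
private lemma bern_step {p q : ℝ} (hp : 0 < p) (hp1 : p < 1) (hpq : p + q = 1)
    {x : ℝ} (hx : 1 ≤ x) : p * x ^ (-q) ≤ x ^ p - (x - 1) ^ p := by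
  have hx0 : (0 : ℝ) < x := lt_of_lt_of_le one_pos hx
  have hinv : x⁻¹ ≤ 1 := inv_le_one_of_one_le₀ hx
  have hs : (-1 : ℝ) ≤ -x⁻¹ := by linarith
  have hb : (1 + -x⁻¹) ^ p ≤ 1 + p * -x⁻¹ :=
    rpow_one_add_le_one_add_mul_self hs hp.le hp1.le
  have hnn : (0 : ℝ) ≤ 1 + -x⁻¹ := by
    have : (0:ℝ) < x⁻¹ := inv_pos.2 hx0
    linarith
  have hxx : x - 1 = x * (1 + -x⁻¹) := by field_simp; ring
  have hxpow : (0 : ℝ) ≤ x ^ p := (Real.rpow_pos_of_pos hx0 p).le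
  have h1 : (x - 1) ^ p ≤ x ^ p * (1 + p * -x⁻¹) := by
    rw [hxx, Real.mul_rpow hx0.le hnn]
    exact mul_le_mul_of_nonneg_left hb hxpow
  have h2 : x ^ p * (1 + p * -x⁻¹) = x ^ p - p * x ^ (p - 1) := by
    rw [Real.rpow_sub hx0, Real.rpow_one]
    field_simp
    ring
  have hpq' : p - 1 = -q := by linarith
  rw [← hpq']
  nlinarith [h1, h2]

/-- Discrete integral comparison: `∑_{n=1}^N n^(-q) ≤ N^p / p`. -/
private lemma sum_rpow_le {p q : ℝ} (hp : 0 < p) (hp1 : p < 1) (hpq : p + q = 1) :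
    ∀ N : ℕ, ∑ n ∈ Finset.range N, ((n : ℝ) + 1) ^ (-q) ≤ (N : ℝ) ^ p / p := by
  intro N
  induction N with
  | zero => simp [Real.zero_rpow hp.ne']
  | succ N ih =>
    rw [Finset.sum_range_succ]
    have hb := bern_step hp hp1 hpq (x := (N : ℝ) + 1) (le_add_of_nonneg_left (Nat.cast_nonneg N))
    have hsub : ((N : ℝ) + 1) - 1 = (N : ℝ) := by ring
    rw [hsub] at hb
    have h2 : ((N : ℝ) + 1) ^ (-q) ≤ (((N : ℝ) + 1) ^ p - (N : ℝ) ^ p) / p := by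
      rw [le_div_iff₀ hp]
      nlinarith [hb]
    have hcast : ((N + 1 : ℕ) : ℝ) = (N : ℝ) + 1 := by push_cast; ring
    rw [hcast]
    have : (((N : ℝ) + 1) ^ p) / p = (N : ℝ) ^ p / p + (((N : ℝ) + 1) ^ p - (N : ℝ) ^ p) / p := by
      ring
    rw [this]
    exact add_le_add ih h2

/-- Pointwise bound: `∑_{n : n+1 < x} (n+1)^(-q) ≤ x^p / p`. -/
private lemma ptwise_le {p q : ℝ} (hp : 0 < p) (hp1 : p < 1) (hpq : p + q = 1)
    {x : ℝ} (hx : 0 ≤ x) :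
    ∑' n : ℕ, (if ((n : ℝ) + 1) < x then ENNReal.ofReal (((n : ℝ) + 1) ^ (-q)) else 0)
      ≤ ENNReal.ofReal (x ^ p / p) := by
  have h0 : ∀ n ∉ Finset.range (Nat.floor x),
      (if ((n : ℝ) + 1) < x then ENNReal.ofReal (((n : ℝ) + 1) ^ (-q)) else 0) = 0 := by
    intro n hn
    rw [if_neg]
    push_neg
    have h1 : x < (Nat.floor x : ℝ) + 1 := Nat.lt_floor_add_one x
    have hn' : (Nat.floor x : ℝ) ≤ (n : ℝ) := by
      exact_mod_cast Nat.cast_le.2 (le_of_not_gt (fun h => hn (Finset.mem_range.2 h)))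
    linarith
  rw [tsum_eq_sum h0]
  calc ∑ n ∈ Finset.range (Nat.floor x),
        (if ((n : ℝ) + 1) < x then ENNReal.ofReal (((n : ℝ) + 1) ^ (-q)) else 0)
      ≤ ∑ n ∈ Finset.range (Nat.floor x), ENNReal.ofReal (((n : ℝ) + 1) ^ (-q)) := by
        apply Finset.sum_le_sum
        intro n _
        split_ifs with h
        · exact le_refl _
        · exact zero_le
    _ = ENNReal.ofReal (∑ n ∈ Finset.range (Nat.floor x), ((n : ℝ) + 1) ^ (-q)) := by
        rw [ENNReal.ofReal_sum_of_nonneg]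
        intro n _
        positivity
    _ ≤ ENNReal.ofReal (((Nat.floor x : ℕ) : ℝ) ^ p / p) :=
        ENNReal.ofReal_le_ofReal (sum_rpow_le hp hp1 hpq _)
    _ ≤ ENNReal.ofReal (x ^ p / p) := by
        apply ENNReal.ofReal_le_ofReal
        gcongr
        exact Nat.floor_le hx

/-- If `X, Y` are nonnegative random variables (on possibly different probability spaces),
`p, q ∈ (0,1)` with `p + q = 1`, `E[X^p] < ∞` and `E[Y^q] < ∞`, then
`∑_{n≥0} P[X > n] P[Y > n] < ∞`. -/
theorem stmt_9 {Ω Ω' : Type*} [MeasurableSpace Ω] [MeasurableSpace Ω']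
    (ℙ : Measure Ω) [IsProbabilityMeasure ℙ] (ℙ' : Measure Ω') [IsProbabilityMeasure ℙ']
    (X : Ω → ℝ) (Y : Ω' → ℝ) (hX : Measurable X) (hY : Measurable Y)
    (hXpos : ∀ ω, 0 ≤ X ω) (hYpos : ∀ ω, 0 ≤ Y ω)
    (p q : ℝ) (hp : 0 < p) (hp1 : p < 1) (hq : 0 < q) (hq1 : q < 1) (hpq : p + q = 1)
    (hXp : ∫⁻ ω, ENNReal.ofReal (X ω ^ p) ∂ℙ < ⊤)
    (hYq : ∫⁻ ω, ENNReal.ofReal (Y ω ^ q) ∂ℙ' < ⊤) :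
    ∑' n : ℕ, ℙ {ω | (n : ℝ) < X ω} * ℙ' {ω | (n : ℝ) < Y ω} < ⊤ := by
  set A := ∫⁻ ω, ENNReal.ofReal (X ω ^ p) ∂ℙ with hA
  set B := ∫⁻ ω, ENNReal.ofReal (Y ω ^ q) ∂ℙ' with hB
  have hYm : Measurable fun ω => ENNReal.ofReal (Y ω ^ q) :=
    (hY.pow measurable_const).ennreal_ofReal
  have hXm : Measurable fun ω => ENNReal.ofReal (X ω ^ p) :=
    (hX.pow measurable_const).ennreal_ofReal
  -- Markov inequality for Y
  have markov : ∀ n : ℕ, ℙ' {ω | ((n : ℝ) + 1) < Y ω}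
      ≤ B * ENNReal.ofReal (((n : ℝ) + 1) ^ (-q)) := by
    intro n
    have hpos : (0 : ℝ) < ((n : ℝ) + 1) ^ q := Real.rpow_pos_of_pos (by positivity) q
    have h1 : ℙ' {ω | ((n : ℝ) + 1) < Y ω}
        ≤ ℙ' {ω | ENNReal.ofReal (((n : ℝ) + 1) ^ q) ≤ ENNReal.ofReal (Y ω ^ q)} := by
      apply measure_mono
      intro ω hω
      exact ENNReal.ofReal_le_ofReal
        (Real.rpow_le_rpow (by positivity) (le_of_lt hω) hq.le)
    refine h1.trans ((meas_ge_le_lintegral_div hYm.aemeasurable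
      (ENNReal.ofReal_pos.2 hpos).ne' ENNReal.ofReal_ne_top).trans_eq ?_)
    rw [div_eq_mul_inv, ← ENNReal.ofReal_inv_of_pos hpos,
      ← Real.rpow_neg (by positivity : (0:ℝ) ≤ (n : ℝ) + 1)]
  -- the key tail sum estimate for X
  have hs : ∀ n : ℕ, MeasurableSet {ω | ((n : ℝ) + 1) < X ω} :=
    fun n => measurableSet_lt measurable_const hX
  have key : ∑' n : ℕ, ℙ {ω | ((n : ℝ) + 1) < X ω} * ENNReal.ofReal (((n : ℝ) + 1) ^ (-q))
      ≤ A * ENNReal.ofReal p⁻¹ := by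
    calc ∑' n : ℕ, ℙ {ω | ((n : ℝ) + 1) < X ω} * ENNReal.ofReal (((n : ℝ) + 1) ^ (-q))
        = ∑' n : ℕ, ∫⁻ ω, ({ω | ((n : ℝ) + 1) < X ω}.indicator
            (fun _ => ENNReal.ofReal (((n : ℝ) + 1) ^ (-q)))) ω ∂ℙ := by
          congr 1
          ext n
          rw [lintegral_indicator_const (hs n), mul_comm]
      _ = ∫⁻ ω, ∑' n : ℕ, ({ω | ((n : ℝ) + 1) < X ω}.indicator
            (fun _ => ENNReal.ofReal (((n : ℝ) + 1) ^ (-q)))) ω ∂ℙ :=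
          (lintegral_tsum fun n => (measurable_const.indicator (hs n)).aemeasurable).symm
      _ ≤ ∫⁻ ω, ENNReal.ofReal (X ω ^ p / p) ∂ℙ := by
          apply lintegral_mono
          intro ω
          have h := ptwise_le hp hp1 hpq (hXpos ω)
          simpa [Set.indicator_apply] using h
      _ = ∫⁻ ω, ENNReal.ofReal (X ω ^ p) * ENNReal.ofReal p⁻¹ ∂ℙ := by
          apply lintegral_congr
          intro ω
          rw [div_eq_mul_inv, ENNReal.ofReal_mul (Real.rpow_nonneg (hXpos ω) p)]
      _ = A * ENNReal.ofReal p⁻¹ := lintegral_mul_const _ hXm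
  rw [tsum_eq_zero_add' ENNReal.summable]
  have h0 : ℙ {ω | ((0 : ℕ) : ℝ) < X ω} * ℙ' {ω | ((0 : ℕ) : ℝ) < Y ω} ≤ 1 := by
    calc ℙ {ω | ((0 : ℕ) : ℝ) < X ω} * ℙ' {ω | ((0 : ℕ) : ℝ) < Y ω}
        ≤ 1 * 1 := mul_le_mul' prob_le_one prob_le_one
      _ = 1 := one_mul 1
  have tail : ∑' n : ℕ, ℙ {ω | ((n + 1 : ℕ) : ℝ) < X ω} * ℙ' {ω | ((n + 1 : ℕ) : ℝ) < Y ω}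
      ≤ B * (A * ENNReal.ofReal p⁻¹) := by
    have hcast : ∀ n : ℕ, ((n + 1 : ℕ) : ℝ) = (n : ℝ) + 1 := fun n => by push_cast; ring
    calc ∑' n : ℕ, ℙ {ω | ((n + 1 : ℕ) : ℝ) < X ω} * ℙ' {ω | ((n + 1 : ℕ) : ℝ) < Y ω}
        = ∑' n : ℕ, ℙ {ω | ((n : ℝ) + 1) < X ω} * ℙ' {ω | ((n : ℝ) + 1) < Y ω} := by
          congr 1; ext n; rw [hcast n]
      _ ≤ ∑' n : ℕ, ℙ {ω | ((n : ℝ) + 1) < X ω}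
            * (B * ENNReal.ofReal (((n : ℝ) + 1) ^ (-q))) :=
          ENNReal.tsum_le_tsum fun n => mul_le_mul_right (markov n) _
      _ = B * ∑' n : ℕ, ℙ {ω | ((n : ℝ) + 1) < X ω} * ENNReal.ofReal (((n : ℝ) + 1) ^ (-q)) := by
          rw [← ENNReal.tsum_mul_left]
          congr 1; ext n; ring
      _ ≤ B * (A * ENNReal.ofReal p⁻¹) := mul_le_mul_right key B
  have hfin : (1 : ENNReal) + B * (A * ENNReal.ofReal p⁻¹) < ⊤ := by
    apply ENNReal.add_lt_top.2
    constructor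
    · exact ENNReal.one_lt_top
    · exact ENNReal.mul_lt_top hYq (ENNReal.mul_lt_top hXp ENNReal.ofReal_lt_top)
  exact lt_of_le_of_lt (add_le_add h0 tail) hfin
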